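/- Suppose the sum of n n-bit natural numbers A_1,…,A_n is decomposed by blocks: partition each A_i into m blocks of ℓ bits (mℓ = n), let S_k = Σ_{i=1}^n Σ_{j=1}^ℓ A_{i,(k−1)ℓ+j}·2^{j−1} be the sum of block k, and suppose each S_k < 2^{tℓ} where t = 1 + ⌈(log₂ n)/ℓ⌉. Writing S_k = Σ_{r=0}^{t−1} T_k^r · 2^{rℓ} with each T_k^r < 2^ℓ, and defining y_r = Σ_{k=1}^m T_k^r · 2^{(k+r−1)ℓ}, then Σ_{i=1}^n A_i = Σ_{r=0}^{t−1} y_r. -/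

import Mathlib

lemma sum_range_mul_block (m ℓ : ℕ) (f : ℕ → ℕ) :
    ∑ j ∈ Finset.range (m * ℓ), f j =
      ∑ k ∈ Finset.range m, ∑ j ∈ Finset.range ℓ, f (k * ℓ + j) := by
  induction m with
  | zero => simp
  | succ m ih =>
    rw [Finset.sum_range_succ, ← ih, Nat.succ_mul, Finset.range_eq_Ico,
      ← Finset.sum_Ico_consecutive f (Nat.zero_le (m * ℓ)) (Nat.le_add_right _ ℓ)]
    congr 1
    · rw [Finset.sum_Ico_eq_sum_range]; simp
    rw [Finset.sum_Ico_eq_sum_range]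
    have h : m * ℓ + ℓ - m * ℓ = ℓ := by omega
    rw [h, Finset.range_eq_Ico]

theorem block_decomposition_of_iterated_addition
    (n m ℓ t : ℕ) (hℓ : 0 < ℓ) (hn : n = m * ℓ)
    (ht : t = 1 + (Nat.clog 2 n + ℓ - 1) / ℓ)
    (A : ℕ → ℕ → Bool)
    (S : ℕ → ℕ)
    (hS : ∀ k < m, S k = ∑ i ∈ Finset.range n, ∑ j ∈ Finset.range ℓ,
      (if A i (k * ℓ + j) then 2 ^ j else 0))
    (hSlt : ∀ k < m, S k < 2 ^ (t * ℓ))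
    (T : ℕ → ℕ → ℕ)
    (hTlt : ∀ k < m, ∀ r < t, T k r < 2 ^ ℓ)
    (hST : ∀ k < m, S k = ∑ r ∈ Finset.range t, T k r * 2 ^ (r * ℓ))
    (y : ℕ → ℕ)
    (hy : ∀ r < t, y r = ∑ k ∈ Finset.range m, T k r * 2 ^ ((k + r) * ℓ)) :
    (∑ i ∈ Finset.range n, ∑ j ∈ Finset.range n, (if A i j then 2 ^ j else 0)) =
      ∑ r ∈ Finset.range t, y r := by
  have hRHS : ∑ r ∈ Finset.range t, y r
      = ∑ k ∈ Finset.range m, S k * 2 ^ (k * ℓ) := by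
    rw [Finset.sum_congr rfl (fun r hr => hy r (Finset.mem_range.mp hr)),
      Finset.sum_comm]
    refine Finset.sum_congr rfl fun k hk => ?_
    rw [hST k (Finset.mem_range.mp hk), Finset.sum_mul]
    refine Finset.sum_congr rfl fun r _ => ?_
    rw [add_mul, pow_add, mul_assoc]
    ring
  subst hn
  rw [hRHS, Finset.sum_comm, sum_range_mul_block m ℓ]
  refine Finset.sum_congr rfl fun k hk => ?_
  rw [hS k (Finset.mem_range.mp hk), Finset.sum_comm, Finset.sum_mul]
  refine Finset.sum_congr rfl fun j _ => ?_
  rw [Finset.sum_mul]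
  refine Finset.sum_congr rfl fun i _ => ?_
  by_cases h : A i (k * ℓ + j) <;> simp [h, pow_add, mul_comm]
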